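/- Let n ≥ 4 and let p : Fin n → ℝ² be the circle placement p(i) = (cos(2πi/n), sin(2πi/n)). If a < b < c < d are four indices in Fin n, then the open segment between p(a) and p(c) and the open segment between p(b) and p(d) have nonempty intersection. (Interleaved chords of the circle drawing cross: in the proof of Lemma 1, every 4-set {a,b,c,d} with a<b<c<d yields a crossing between the edges (a,c) and (b,d).) -/

import Mathlib

open Real

/-- Product identity for `sin x + sin y - sin (x+y)`. -/
lemma sin_tri (x y : ℝ) :
    Real.sin x + Real.sin y - Real.sin (x + y) =
      4 * Real.sin (x/2) * Real.sin (y/2) * Real.sin ((x+y)/2) := by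
  have hx : Real.sin x = 2 * Real.sin (x/2) * Real.cos (x/2) := by
    have := Real.sin_two_mul (x/2); rw [show 2*(x/2) = x by ring] at this; linarith
  have hy : Real.sin y = 2 * Real.sin (y/2) * Real.cos (y/2) := by
    have := Real.sin_two_mul (y/2); rw [show 2*(y/2) = y by ring] at this; linarith
  have hxy : Real.sin (x+y) = 2 * Real.sin ((x+y)/2) * Real.cos ((x+y)/2) := by
    have := Real.sin_two_mul ((x+y)/2); rw [show 2*((x+y)/2) = x+y by ring] at this; linarith
  have hs : Real.sin ((x+y)/2) = Real.sin (x/2) * Real.cos (y/2) + Real.cos (x/2) * Real.sin (y/2) := by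
    rw [show (x+y)/2 = x/2 + y/2 by ring, Real.sin_add]
  have hc : Real.cos ((x+y)/2) = Real.cos (x/2) * Real.cos (y/2) - Real.sin (x/2) * Real.sin (y/2) := by
    rw [show (x+y)/2 = x/2 + y/2 by ring, Real.cos_add]
  have p1 := Real.sin_sq_add_cos_sq (x/2)
  have p2 := Real.sin_sq_add_cos_sq (y/2)
  rw [hx, hy, hxy, hs, hc]
  linear_combination (-2 * Real.sin (x/2) * Real.cos (x/2)) * p2 +
    (-2 * Real.sin (y/2) * Real.cos (y/2)) * p1

/-- Three points on the unit circle at increasing angles (within one turn) are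
positively oriented. -/
lemma orient_pos {α β γ : ℝ} (h1 : α < β) (h2 : β < γ) (h3 : γ - α < 2 * π) :
    0 < (Real.cos β - Real.cos α) * (Real.sin γ - Real.sin α) -
        (Real.sin β - Real.sin α) * (Real.cos γ - Real.cos α) := by
  have e : (Real.cos β - Real.cos α) * (Real.sin γ - Real.sin α) -
        (Real.sin β - Real.sin α) * (Real.cos γ - Real.cos α)
      = Real.sin (β - α) + Real.sin (γ - β) - Real.sin ((β - α) + (γ - β)) := by
    rw [Real.sin_sub, Real.sin_sub, show (β - α) + (γ - β) = γ - α by ring, Real.sin_sub]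
    ring
  rw [e, sin_tri]
  have s1 : 0 < Real.sin ((β - α)/2) :=
    Real.sin_pos_of_pos_of_lt_pi (by linarith) (by linarith)
  have s2 : 0 < Real.sin ((γ - β)/2) :=
    Real.sin_pos_of_pos_of_lt_pi (by linarith) (by linarith)
  have s3 : 0 < Real.sin (((β - α) + (γ - β))/2) :=
    Real.sin_pos_of_pos_of_lt_pi (by linarith) (by linarith)
  positivity

/-- Purely algebraic crossing lemma: if `B` and `D` are strictly on opposite sides
of line `AC`, and `A` and `C` strictly on opposite sides of line `BD`, then the
open segments `AC` and `BD` meet. -/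
lemma segs_cross (A B C D : ℝ × ℝ)
    (hB : (C.1 - A.1) * (B.2 - A.2) - (C.2 - A.2) * (B.1 - A.1) < 0)
    (hD : 0 < (C.1 - A.1) * (D.2 - A.2) - (C.2 - A.2) * (D.1 - A.1))
    (hA : 0 < (D.1 - B.1) * (A.2 - B.2) - (D.2 - B.2) * (A.1 - B.1))
    (hC : (D.1 - B.1) * (C.2 - B.2) - (D.2 - B.2) * (C.1 - B.1) < 0) :
    (openSegment ℝ A C ∩ openSegment ℝ B D).Nonempty := by
  obtain ⟨a1, a2⟩ := A; obtain ⟨b1, b2⟩ := B; obtain ⟨c1, c2⟩ := C; obtain ⟨d1, d2⟩ := D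
  simp only at hB hD hA hC
  set fB := (c1 - a1) * (b2 - a2) - (c2 - a2) * (b1 - a1) with hfB
  set fD := (c1 - a1) * (d2 - a2) - (c2 - a2) * (d1 - a1) with hfD
  set gA := (d1 - b1) * (a2 - b2) - (d2 - b2) * (a1 - b1) with hgA
  set gC := (d1 - b1) * (c2 - b2) - (d2 - b2) * (c1 - b1) with hgC
  have hΔ : 0 < fD - fB := by linarith
  have hid : gA - gC = fD - fB := by rw [hfB, hfD, hgA, hgC]; ring
  set r := gA / (fD - fB) with hr
  set t := -fB / (fD - fB) with ht
  have hr0 : 0 < r := div_pos hA hΔ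
  have hr1 : r < 1 := by rw [hr, div_lt_one hΔ]; linarith
  have ht0 : 0 < t := by rw [ht]; exact div_pos (by linarith) hΔ
  have ht1 : t < 1 := by rw [ht, div_lt_one hΔ]; linarith
  have hΔne : fD - fB ≠ 0 := ne_of_gt hΔ
  refine ⟨((1 - r) * a1 + r * c1, (1 - r) * a2 + r * c2), ?_, ?_⟩
  · exact ⟨1 - r, r, by linarith, hr0, by ring, by
      simp [Prod.smul_mk, Prod.mk_add_mk, smul_eq_mul]⟩
  · refine ⟨1 - t, t, by linarith, ht0, by ring, ?_⟩
    simp only [Prod.smul_mk, Prod.mk_add_mk, smul_eq_mul, Prod.mk.injEq]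
    constructor
    · rw [hr, ht]
      field_simp
      rw [hfB, hfD, hgA]
      ring
    · rw [hr, ht]
      field_simp
      rw [hfB, hfD, hgA]
      ring

/-- The circle placement: vertex `i` of `Fin n` is placed at the point
`(cos (2πi/n), sin (2πi/n))` of the unit circle in `ℝ²`. -/
noncomputable def circlePlacement (n : ℕ) : Fin n → ℝ × ℝ :=
  fun i => (Real.cos (2 * Real.pi * (i : ℕ) / n), Real.sin (2 * Real.pi * (i : ℕ) / n))

/-- Interleaved chords of the circle drawing cross: for `a < b < c < d` in `Fin n`,
the open segments `p a p c` and `p b p d` intersect. -/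
theorem interleaved_chords_cross (n : ℕ) (hn : 4 ≤ n)
    (a b c d : Fin n) (hab : a < b) (hbc : b < c) (hcd : c < d) :
    (openSegment ℝ (circlePlacement n a) (circlePlacement n c) ∩
      openSegment ℝ (circlePlacement n b) (circlePlacement n d)).Nonempty := by
  have hnpos : (0:ℝ) < n := by
    have : 0 < n := lt_of_lt_of_le (by norm_num) hn
    exact_mod_cast this
  set θ : Fin n → ℝ := fun i => 2 * π * (i : ℕ) / n with hθ
  have mono : ∀ {i j : Fin n}, i < j → θ i < θ j := by
    intro i j h
    have hij : ((i : ℕ) : ℝ) < ((j : ℕ) : ℝ) := by exact_mod_cast h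
    have h2 : 2 * π * (i : ℕ) < 2 * π * (j : ℕ) := by
      have h2π : (0:ℝ) < 2 * π := by positivity
      exact mul_lt_mul_of_pos_left hij h2π
    rw [hθ]
    exact (div_lt_div_iff_of_pos_right hnpos).mpr h2
  have h0 : 0 ≤ θ a := by rw [hθ]; positivity
  have hdlt : θ d < 2 * π := by
    rw [hθ]
    rw [div_lt_iff₀ hnpos]
    have hd : ((d : ℕ) : ℝ) < n := by exact_mod_cast d.isLt
    nlinarith [Real.pi_pos]
  have h1 := mono hab
  have h2 := mono hbc
  have h3 := mono hcd
  have key := segs_cross (circlePlacement n a) (circlePlacement n b)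
      (circlePlacement n c) (circlePlacement n d) ?_ ?_ ?_ ?_
  · exact key
  · have := orient_pos h1 h2 (by linarith : θ c - θ a < 2 * π)
    simp only [hθ] at this
    simp only [circlePlacement]
    linarith [this]
  · have := orient_pos (lt_trans h1 h2) h3 (by linarith : θ d - θ a < 2 * π)
    simp only [hθ] at this
    simp only [circlePlacement]
    linarith [this]
  · have := orient_pos h1 (lt_trans h2 h3) (by linarith : θ d - θ a < 2 * π)
    simp only [hθ] at this
    simp only [circlePlacement]
    linarith [this]
  · have := orient_pos h2 h3 (by linarith : θ d - θ b < 2 * π)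
    simp only [hθ] at this
    simp only [circlePlacement]
    linarith [this]
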